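/- Let |α⟩ = Σ_{j=0}^{d-1} α_j|j⟩ be a unit vector in ℂ^d (d even) satisfying ⟨α| X^{d/2} Z^i |α⟩ = 0 for all i = 0, 1, ..., d/2. Then ᾱ_j α_{j+d/2 mod d} = 0 for every j; in particular at least d/2 of the coefficients α_j vanish. -/

import Mathlib

open Matrix

/-- The primitive `d`-th root of unity `ω = e^{2πi/d}`. -/
noncomputable def omega (d : ℕ) : ℂ := Complex.exp (2 * Real.pi * Complex.I / d)

/-- The generalized Pauli shift matrix `X` on `ℂ^d`: `X|j⟩ = |j+1 mod d⟩`. -/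
def Xmat (d : ℕ) : Matrix (Fin d) (Fin d) ℂ :=
  Matrix.of fun i j => if (i : ℕ) = ((j : ℕ) + 1) % d then 1 else 0

/-- The generalized Pauli clock matrix `Z` on `ℂ^d`: `Z|j⟩ = ω^j|j⟩`. -/
noncomputable def Zmat (d : ℕ) : Matrix (Fin d) (Fin d) ℂ :=
  Matrix.diagonal fun j => omega d ^ (j : ℕ)

lemma Xpow_entry (d m : ℕ) : ∀ k j : Fin d,
    (Xmat d ^ m) k j = if (k : ℕ) = ((j : ℕ) + m) % d then 1 else 0 := by
  induction m with
  | zero =>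
    intro k j
    simp [Matrix.one_apply, Fin.ext_iff, Nat.mod_eq_of_lt j.isLt]
  | succ m ih =>
    intro k j
    have hd0 : 0 < d := j.pos
    rw [pow_succ, Matrix.mul_apply]
    have hX : ∀ l : Fin d, Xmat d l j
        = if l = (⟨((j : ℕ) + 1) % d, Nat.mod_lt _ hd0⟩ : Fin d) then 1 else 0 := by
      intro l
      simp [Xmat, Fin.ext_iff]
    simp_rw [hX, mul_ite, mul_one, mul_zero, Finset.sum_ite_eq', Finset.mem_univ, if_true, ih]
    have : (((j : ℕ) + 1) % d + m) % d = ((j : ℕ) + (m + 1)) % d := by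
      rw [Nat.mod_add_mod]
      ring_nf
    rw [this]

/-- If a unit vector `α` in `ℂ^d` (`d` even) satisfies `⟨α|X^{d/2}Z^i|α⟩ = 0`
for all `i = 0,…,d/2`, then `conj(α_j)·α_{j + d/2 mod d} = 0` for every `j`;
in particular at least `d/2` of the coefficients vanish. -/
theorem half_coefficients_vanish (d : ℕ) (hd0 : 0 < d) (he : 2 ∣ d)
    (α : Fin d → ℂ) (hunit : star α ⬝ᵥ α = 1)
    (h : ∀ i : ℕ, i ≤ d / 2 →
      star α ⬝ᵥ (Xmat d ^ (d / 2) * Zmat d ^ i).mulVec α = 0) :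
    (∀ j : Fin d,
      (starRingEnd ℂ) (α j) * α ⟨((j : ℕ) + d / 2) % d, Nat.mod_lt _ j.pos⟩ = 0) ∧
    d / 2 ≤ (Finset.univ.filter fun j : Fin d => α j = 0).card := by
  set m := d / 2 with hm
  have hmm : m + m = d := by omega
  set ζ := omega d with hζ
  have hprim : IsPrimitiveRoot ζ d := Complex.isPrimitiveRoot_exp d hd0.ne'
  have hζd : ζ ^ d = 1 := hprim.pow_eq_one
  have hred : ∀ a : ℕ, ζ ^ (a % d) = ζ ^ a := by
    intro a
    conv_rhs => rw [← Nat.div_add_mod a d]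
    rw [pow_add, pow_mul, hζd, one_pow, one_mul]
  have hζne : ζ ≠ 0 := by
    rw [hζ, omega]; exact Complex.exp_ne_zero _
  have hcu : (starRingEnd ℂ) ζ * ζ = 1 := by
    rw [hζ, omega, ← Complex.exp_conj, ← Complex.exp_add]
    have hc : (starRingEnd ℂ) (2 * ↑Real.pi * Complex.I / ↑d)
        = -(2 * ↑Real.pi * Complex.I / ↑d) := by
      simp only [map_div₀, _root_.map_mul, Complex.conj_I, Complex.conj_ofReal,
        Complex.conj_natCast, map_ofNat]
      ring
    rw [hc, neg_add_cancel, Complex.exp_zero]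
  set σ : Fin d → Fin d := fun j => ⟨((j : ℕ) + m) % d, Nat.mod_lt _ hd0⟩ with hσ
  have hσσ : ∀ j, σ (σ j) = j := by
    intro j
    apply Fin.ext
    show (((j : ℕ) + m) % d + m) % d = j
    rw [Nat.mod_add_mod]
    have h1 : (j : ℕ) + m + m = (j : ℕ) + d := by omega
    rw [h1, Nat.add_mod_right, Nat.mod_eq_of_lt j.isLt]
  set β : Fin d → ℂ := fun j => (starRingEnd ℂ) (α (σ j)) * α j with hβ
  have hS : ∀ i : ℕ, star α ⬝ᵥ (Xmat d ^ m * Zmat d ^ i).mulVec α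
      = ∑ j : Fin d, β j * ζ ^ ((j : ℕ) * i) := by
    intro i
    have hM : ∀ k j : Fin d, (Xmat d ^ m * Zmat d ^ i) k j
        = (if k = σ j then 1 else 0) * ζ ^ ((j : ℕ) * i) := by
      intro k j
      rw [Zmat, Matrix.diagonal_pow, Matrix.mul_diagonal, Xpow_entry, Pi.pow_apply, ← pow_mul]
      have h1 : ((k : ℕ) = ((j : ℕ) + m) % d) ↔ (k = σ j) := by
        simp [Fin.ext_iff, hσ]
      rw [if_congr h1 rfl rfl]
    simp only [dotProduct, Matrix.mulVec, dotProduct, hM, Pi.star_apply,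
      Finset.mul_sum]
    rw [Finset.sum_comm]
    refine Finset.sum_congr rfl fun j _ => ?_
    simp only [ite_mul, one_mul, zero_mul, mul_ite, mul_zero]
    rw [Finset.sum_ite_eq', if_pos (Finset.mem_univ _)]
    simp only [hβ, RCLike.star_def]
    ring
  have hF : ∀ i : ℕ, i ≤ m → (∑ j : Fin d, β j * ζ ^ ((j : ℕ) * i)) = 0 := by
    intro i hi
    rw [← hS]
    exact h i hi
  have hFall : ∀ i : ℕ, i < d → (∑ j : Fin d, β j * ζ ^ ((j : ℕ) * i)) = 0 := by
    intro i hi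
    by_cases hile : i ≤ m
    · exact hF i hile
    · push_neg at hile
      set i' := d - i with hi'
      have hi'le : i' ≤ m := by omega
      have hii' : i' + i = d := by omega
      have h0 := hF i' hi'le
      have hc := congrArg (starRingEnd ℂ) h0
      rw [map_sum, map_zero] at hc
      have hterm : ∀ j : Fin d, (starRingEnd ℂ) (β j * ζ ^ ((j : ℕ) * i'))
          = β (σ j) * ζ ^ ((j : ℕ) * i) := by
        intro j
        rw [_root_.map_mul]
        congr 1
        · simp only [hβ, _root_.map_mul, Complex.conj_conj, hσσ]
          ring
        · have h1 : ζ ^ ((j : ℕ) * i') * ζ ^ ((j : ℕ) * i) = 1 := by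
            rw [← pow_add, ← Nat.mul_add, hii', Nat.mul_comm, pow_mul, hζd, one_pow]
          have h2 : (starRingEnd ℂ) (ζ ^ ((j : ℕ) * i')) * ζ ^ ((j : ℕ) * i') = 1 := by
            rw [map_pow, ← mul_pow, hcu, one_pow]
          rw [eq_inv_of_mul_eq_one_left h2]
          exact inv_eq_of_mul_eq_one_right h1
      rw [Finset.sum_congr rfl (fun j _ => hterm j)] at hc
      have hre := (Equiv.sum_comp (Function.Involutive.toPerm σ hσσ)
        (fun j => β (σ j) * ζ ^ ((j : ℕ) * i))).trans hc
      change ∑ k, β (σ (σ k)) * ζ ^ (((σ k : Fin d) : ℕ) * i) = 0 at hre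
      simp only [hσσ] at hre
      -- hre : ∑ k, β k * ζ ^ ((σ k : ℕ) * i) = 0
      have hexp : ∀ k : Fin d, ζ ^ (((σ k : Fin d) : ℕ) * i)
          = ζ ^ ((k : ℕ) * i) * ζ ^ (m * i) := by
        intro k
        have hmod : ((((k : ℕ) + m) % d) * i) % d = (((k : ℕ) + m) * i) % d :=
          (Nat.mod_modEq ((k : ℕ) + m) d).mul_right i
        show ζ ^ ((((k : ℕ) + m) % d) * i) = _
        rw [← hred ((((k : ℕ) + m) % d) * i), hmod, hred, Nat.add_mul, pow_add]
      rw [Finset.sum_congr rfl (fun k _ => by rw [hexp k])] at hre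
      have hfac : ∑ k : Fin d, β k * (ζ ^ ((k : ℕ) * i) * ζ ^ (m * i))
          = (∑ k : Fin d, β k * ζ ^ ((k : ℕ) * i)) * ζ ^ (m * i) := by
        rw [Finset.sum_mul]
        exact Finset.sum_congr rfl fun k _ => by ring
      rw [hfac] at hre
      exact (mul_eq_zero.mp hre).resolve_right (pow_ne_zero _ hζne)
  have hβ0 : ∀ j' : Fin d, β j' = 0 := by
    intro j'
    have hsum : ∑ i ∈ Finset.range d,
        ζ ^ ((d - (j' : ℕ)) * i) * (∑ k : Fin d, β k * ζ ^ ((k : ℕ) * i)) = 0 :=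
      Finset.sum_eq_zero fun i hi => by
        rw [hFall i (Finset.mem_range.mp hi), mul_zero]
    have hswap : ∑ i ∈ Finset.range d,
        ζ ^ ((d - (j' : ℕ)) * i) * (∑ k : Fin d, β k * ζ ^ ((k : ℕ) * i))
        = ∑ k : Fin d, β k * ∑ i ∈ Finset.range d, (ζ ^ ((k : ℕ) + (d - (j' : ℕ)))) ^ i := by
      simp only [Finset.mul_sum]
      rw [Finset.sum_comm]
      refine Finset.sum_congr rfl fun k _ => ?_
      refine Finset.sum_congr rfl fun i _ => ?_
      rw [← pow_mul, Nat.add_mul, pow_add]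
      ring
    have hinner : ∀ k : Fin d, (∑ i ∈ Finset.range d, (ζ ^ ((k : ℕ) + (d - (j' : ℕ)))) ^ i)
        = if k = j' then (d : ℂ) else 0 := by
      intro k
      by_cases hk : k = j'
      · subst hk
        have h1 : (k : ℕ) + (d - (k : ℕ)) = d := by omega
        rw [if_pos rfl, h1, hζd]
        simp
      · rw [if_neg hk]
        set e := (k : ℕ) + (d - (j' : ℕ)) with he
        have hj' : (j' : ℕ) < d := j'.isLt
        have hkd : (k : ℕ) < d := k.isLt
        have hnd : ¬ d ∣ e := by
          intro hdvd
          have h4 : e - d = 0 ∨ d ≤ e - d := by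
            rcases Nat.eq_zero_or_pos (e - d) with h | h
            · exact Or.inl h
            · exact Or.inr (Nat.le_of_dvd h (Nat.dvd_sub hdvd dvd_rfl))
          have h5 : e = d ∨ e = 0 := by
            rcases Nat.lt_or_ge e d with h6 | h6
            · exact Or.inr (Nat.eq_zero_of_dvd_of_lt hdvd h6)
            · left; omega
          have hkj : (k : ℕ) = (j' : ℕ) := by omega
          exact hk (Fin.ext hkj)
        have hne1 : ζ ^ e ≠ 1 := by
          rw [← hred e]
          have h7 : e % d ≠ 0 := fun hmod => hnd (Nat.dvd_of_mod_eq_zero hmod)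
          exact hprim.pow_ne_one_of_pos_of_lt h7 (Nat.mod_lt _ hd0)
        rw [geom_sum_eq hne1]
        have h8 : (ζ ^ e) ^ d = 1 := by
          rw [← pow_mul, mul_comm, pow_mul, hζd, one_pow]
        rw [h8, sub_self, zero_div]
    rw [hswap, Finset.sum_congr rfl (fun k _ => by rw [hinner k])] at hsum
    simp only [mul_ite, mul_zero] at hsum
    rw [Finset.sum_ite_eq', if_pos (Finset.mem_univ _)] at hsum
    have hdne : (d : ℂ) ≠ 0 := Nat.cast_ne_zero.mpr hd0.ne'
    exact (mul_eq_zero.mp hsum).resolve_right hdne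
  have hmain : ∀ j : Fin d,
      (starRingEnd ℂ) (α j) * α ⟨((j : ℕ) + m) % d, Nat.mod_lt _ j.pos⟩ = 0 := by
    intro j
    have h1 : β (σ j) = 0 := hβ0 (σ j)
    rw [hβ] at h1
    simp only [hσσ] at h1
    exact h1
  refine ⟨hmain, ?_⟩
  have hzero : ∀ j : Fin d, α j ≠ 0 → α (σ j) = 0 := by
    intro j hj
    have := hmain j
    rcases mul_eq_zero.mp this with h1 | h1
    · exact absurd (by simpa using h1) hj
    · exact h1
  set S := Finset.univ.filter (fun j : Fin d => α j = 0) with hs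
  have hmapsto : ∀ j ∈ Sᶜ, σ j ∈ S := by
    intro j hj
    simp only [hs, Finset.mem_compl, Finset.mem_filter, Finset.mem_univ, true_and] at *
    exact hzero j hj
  have hcard : Sᶜ.card ≤ S.card :=
    Finset.card_le_card_of_injOn σ hmapsto
      ((Function.Involutive.injective hσσ).injOn)
  have htot : S.card + Sᶜ.card = d := by
    rw [Finset.card_add_card_compl]
    simp
  omega
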